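/- Let R be a commutative ring and s ∈ R. Every s-contraadjusted R-module C (i.e., one with Ext¹_R(R[s⁻¹], C) = 0) is s-adically complete: the natural map C → lim_{n} C/sⁿC is surjective. -/

import Mathlib

open CategoryTheory Opposite

section Auxiliary

open Polynomial Limits

noncomputable section
namespace SCA

variable {R : Type} [CommRing R] (s : R)

def dP : R[X] →ₗ[R] R[X] := LinearMap.mulLeft R (1 - C s * X)

def piP : R[X] →ₗ[R] Localization.Away s :=
  (aeval (IsLocalization.Away.invSelf s) : R[X] →ₐ[R] Localization.Away s).toLinearMap

lemma dP_apply (f : R[X]) : dP s f = (1 - C s * X) * f := rfl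

lemma dP_injective : Function.Injective (dP s) := by
  rw [injective_iff_map_eq_zero]
  intro f hf
  have h : f = C s * X * f := by
    have h0 : f - C s * X * f = 0 := by
      have := hf
      rw [dP_apply, sub_mul, one_mul] at this
      exact this
    exact sub_eq_zero.mp h0
  ext n
  induction n using Nat.strong_induction_on with
  | _ n ih =>
    cases n with
    | zero => rw [h]; simp
    | succ m =>
      rw [h]
      simp only [mul_assoc, coeff_C_mul, coeff_X_mul, coeff_zero]
      rw [ih m (Nat.lt_succ_self m)]
      simp

lemma piP_comp_dP (f : R[X]) : piP s (dP s f) = 0 := by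
  simp only [piP, dP_apply, AlgHom.toLinearMap_apply, map_mul]
  have : (aeval (IsLocalization.Away.invSelf s) : R[X] →ₐ[R] Localization.Away s)
      (1 - C s * X) = 0 := by
    simp [IsLocalization.Away.mul_invSelf]
  rw [this, zero_mul]

lemma piP_surjective : Function.Surjective (piP s) := by
  intro z
  obtain ⟨⟨r, m⟩, hz⟩ := IsLocalization.surj (Submonoid.powers s) z
  obtain ⟨n, hn⟩ := m.2
  refine ⟨C r * X ^ n, ?_⟩
  have h1 : (aeval (IsLocalization.Away.invSelf s) : R[X] →ₐ[R] Localization.Away s)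
      (C r * X ^ n) = algebraMap R _ r * (IsLocalization.Away.invSelf s) ^ n := by
    simp
  have h2 : algebraMap R (Localization.Away s) (m : R) * (IsLocalization.Away.invSelf s) ^ n
      = 1 := by
    rw [← hn, map_pow, ← mul_pow, IsLocalization.Away.mul_invSelf, one_pow]
  calc piP s (C r * X ^ n) = algebraMap R _ r * (IsLocalization.Away.invSelf s) ^ n := h1
  _ = z * (algebraMap R _ (m : R) * (IsLocalization.Away.invSelf s) ^ n) := by
      rw [← hz]; ring
  _ = z := by rw [h2, mul_one]

lemma exact_dP_piP (f : R[X]) (hf : piP s f = 0) : ∃ g, dP s g = f := by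
  set e := Localization.awayEquivAdjoin s
  have hroot : e.symm (AdjoinRoot.root (C s * X - 1)) = IsLocalization.Away.invSelf s := by
    have h1 : algebraMap R (Localization.Away s) s
        * e.symm (AdjoinRoot.root (C s * X - 1)) = 1 := by
      have := AdjoinRoot.root_isInv s
      have h2 := congrArg e.symm congr(AdjoinRoot.of (C s * X - 1) s * AdjoinRoot.root (C s * X - 1))
      calc algebraMap R (Localization.Away s) s * e.symm (AdjoinRoot.root (C s * X - 1))
          = e.symm (AdjoinRoot.of (C s * X - 1) s * AdjoinRoot.root (C s * X - 1)) := by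
            rw [map_mul]; congr 1; exact (e.symm.commutes s).symm
        _ = 1 := by rw [AdjoinRoot.root_isInv s, map_one]
    have h3 := IsLocalization.Away.mul_invSelf (S := Localization.Away s) s
    calc e.symm (AdjoinRoot.root (C s * X - 1))
        = e.symm (AdjoinRoot.root (C s * X - 1)) * (algebraMap R (Localization.Away s) s
            * IsLocalization.Away.invSelf s) := by rw [h3, mul_one]
      _ = (algebraMap R (Localization.Away s) s * e.symm (AdjoinRoot.root (C s * X - 1)))
            * IsLocalization.Away.invSelf s := by ring
      _ = IsLocalization.Away.invSelf s := by rw [h1, one_mul]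
  have key : piP s f = e.symm (AdjoinRoot.mk (C s * X - 1) f) := by
    rw [← AdjoinRoot.aeval_eq]
    show (aeval (IsLocalization.Away.invSelf s)) f = _
    rw [← hroot, aeval_algEquiv]
    rfl
  rw [key] at hf
  have hmk : AdjoinRoot.mk (C s * X - 1) f = 0 := by
    apply e.symm.injective
    rw [map_zero]
    exact hf
  rw [AdjoinRoot.mk_eq_zero] at hmk
  obtain ⟨g, hg⟩ := hmk
  exact ⟨-g, by rw [dP_apply, hg]; ring⟩


variable (R : Type) [CommRing R] (s : R)

def cxX : ℕ → ModuleCat R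
  | 0 => ModuleCat.of R R[X]
  | 1 => ModuleCat.of R R[X]
  | _ + 2 => ModuleCat.of R PUnit

variable {R}

def dPHom : cxX R 1 ⟶ cxX R 0 := ModuleCat.ofHom (dP s)

def cxd : ∀ n, cxX R (n + 1) ⟶ cxX R n
  | 0 => dPHom s
  | _ + 1 => 0

def cx : ChainComplex (ModuleCat R) ℕ :=
  ChainComplex.of (cxX R) (cxd s) (by
    rintro (_ | n)
    · show (0 : cxX R 2 ⟶ cxX R 1) ≫ _ = 0
      simp
    · show (0 : _ ⟶ _) ≫ _ = 0
      simp)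

lemma cx_d_1_0 : (cx s).d 1 0 = dPHom s := ChainComplex.of_d (cxX R) (cxd s) 0
lemma cx_d_senior (n : ℕ) : (cx s).d (n + 2) (n + 1) = 0 := ChainComplex.of_d _ _ (n + 1)

instance (n : ℕ) : Projective ((cx s).X n) := by
  have b := Polynomial.basisMonomials R
  match n with
  | 0 => exact ModuleCat.projective_of_free (M := ModuleCat.of R R[X]) b
  | 1 => exact ModuleCat.projective_of_free (M := ModuleCat.of R R[X]) b
  | n + 2 => exact (ModuleCat.isZero_of_subsingleton (ModuleCat.of R PUnit)).projective

def LM : ModuleCat R := ModuleCat.of R (Localization.Away s)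

def piPHom : cxX R 0 ⟶ LM s := ModuleCat.ofHom (piP s)

lemma d_comp_piP : (cx s).d 1 0 ≫ piPHom s = 0 := by
  rw [cx_d_1_0]
  exact ModuleCat.hom_ext (LinearMap.ext fun f => piP_comp_dP s f)

def cxπ : cx s ⟶ (ChainComplex.single₀ (ModuleCat R)).obj (LM s) :=
  (ChainComplex.toSingle₀Equiv _ _).symm ⟨piPHom s, d_comp_piP s⟩

lemma cxπ_f_0 : (cxπ s).f 0 = piPHom s :=
  ChainComplex.toSingle₀Equiv_symm_apply_f_zero _ _

lemma cx_exactAt_succ (n : ℕ) : (cx s).ExactAt (n + 1) := by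
  match n with
  | 0 =>
    rw [HomologicalComplex.exactAt_iff' (cx s) 2 1 0 (by simp) (by simp)]
    rw [ShortComplex.moduleCat_exact_iff]
    intro x hx
    have hx0 : (cx s).d 1 0 x = 0 := hx
    rw [cx_d_1_0] at hx0
    have hx' : dP s x = 0 := hx0
    have : x = 0 := dP_injective s (by rw [hx']; exact (map_zero (dP s)).symm)
    exact ⟨0, by rw [map_zero, this]⟩
  | n + 1 =>
    rw [HomologicalComplex.exactAt_iff]
    exact ShortComplex.exact_of_isZero_X₂ _
      (ModuleCat.isZero_of_subsingleton (ModuleCat.of R PUnit))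

instance : QuasiIso (cxπ s) := by
  constructor
  rintro (_ | n)
  · rw [ChainComplex.quasiIsoAt₀_iff, ShortComplex.quasiIso_iff_of_zeros']
    rotate_left
    · exact (cx s).shape 0 0 (by simp)
    · exact (HomologicalComplex.isZero_single_obj_X (ComplexShape.down ℕ) 0 (LM s) 1
        (by simp)).eq_of_src _ _
    · exact ((ChainComplex.single₀ (ModuleCat R)).obj (LM s)).shape 0 0 (by simp)
    constructor
    · rw [ShortComplex.moduleCat_exact_iff]
      intro x hx
      have e0 : (cxπ s).f 0 x = piP s x := LinearMap.congr_fun (congrArg ModuleCat.Hom.hom (cxπ_f_0 s)) x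
      have hx1 : (cxπ s).f 0 x = 0 := hx
      have hx' : piP s x = 0 := by rw [← e0]; exact hx1
      obtain ⟨g, hg⟩ := exact_dP_piP s x hx'
      refine ⟨g, ?_⟩
      have hg2 : (cx s).d 1 0 g = x := by rw [cx_d_1_0]; exact hg
      exact hg2
    · have h2 : ((HomologicalComplex.shortComplexFunctor' (ModuleCat R)
          (ComplexShape.down ℕ) 1 0 0).map (cxπ s)).τ₂ = (cxπ s).f 0 := rfl
      rw [h2, cxπ_f_0]
      exact (ModuleCat.epi_iff_surjective (piPHom s)).mpr (piP_surjective s)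
  · rw [quasiIsoAt_iff_exactAt' (cxπ s) (n + 1)
      (ChainComplex.exactAt_succ_single_obj _ _)]
    exact cx_exactAt_succ s n

def res : ProjectiveResolution (LM s) where
  complex := cx s
  π := cxπ s



section Lift
variable (Cm : ModuleCat R)

lemma lift_exists
    (h : Subsingleton (((Ext R (ModuleCat R) 1).obj (op (LM s))).obj Cm))
    (φ : cxX R 1 ⟶ Cm) :
    ∃ ψ : cxX R 0 ⟶ Cm, ∀ p : R[X], ψ (dP s p) = φ p := by
  set K := (cx s).linearYonedaObj R Cm with hK
  have e := (res s).isoExt (R := R) 1 Cm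
  have hz : IsZero (K.homology 1) :=
    IsZero.of_iso (ModuleCat.isZero_of_subsingleton _) e.symm
  have hex : K.ExactAt 1 := by
    rw [HomologicalComplex.exactAt_iff_isZero_homology]
    exact hz
  rw [HomologicalComplex.exactAt_iff' K 0 1 2 (by simp) (by simp)] at hex
  rw [ShortComplex.moduleCat_exact_iff] at hex
  have hsub : Subsingleton ((cx s).X 2 ⟶ Cm) :=
    ⟨fun a b => ModuleCat.hom_ext
      (@Subsingleton.elim _ (@Unique.instSubsingleton _ (LinearMap.uniqueOfLeft (M := PUnit))) _ _)⟩
  obtain ⟨ψ, hψ⟩ := hex φ (by exact hsub.elim _ _)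
  refine ⟨ψ, fun p => ?_⟩
  have h1 : (K.sc' 0 1 2).f ψ = φ := hψ
  have h2 : K.d 0 1 ψ = φ := h1
  rw [ChainComplex.linearYonedaObj_d] at h2
  have h3 : (cx s).d 1 0 ≫ ψ = φ := h2
  rw [cx_d_1_0] at h3
  exact LinearMap.congr_fun (congrArg ModuleCat.Hom.hom h3) p

end Lift
end SCA


end
end Auxiliary

open Polynomial in
/-- Over a commutative ring `R`, every `s`-contraadjusted `R`-module `C`
(one with `Ext¹_R(R[s⁻¹],C) = 0`) is `s`-adically complete: the natural map
`C → lim_n C/sⁿC` is surjective. -/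
theorem sContraadjusted_implies_sAdically_complete
    (R : Type) [CommRing R] (s : R) (C : Type) [AddCommGroup C] [Module R C]
    (h : Subsingleton (((Ext R (ModuleCat R) 1).obj
      (op (ModuleCat.of R (Localization.Away s)))).obj (ModuleCat.of R C))) :
    Function.Surjective (AdicCompletion.of (Ideal.span {s}) C) := by
  classical
  intro x
  have hsur : ∀ n : ℕ, ∃ c : C, (Submodule.Quotient.mk c : C ⧸ (Ideal.span {s} ^ n • ⊤ : Submodule R C))
      = x.val n := fun n => Submodule.mkQ_surjective _ (x.val n)
  choose c hc using hsur
  have hdiff : ∀ n : ℕ, ∃ y : C, c (n + 1) - c n = s ^ n • y := by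
    intro n
    have ht := x.2 (Nat.le_succ n)
    rw [← hc (n + 1), ← hc n] at ht
    have hlift : AdicCompletion.transitionMap (Ideal.span {s}) C (Nat.le_succ n)
        (Submodule.Quotient.mk (c (n + 1))) =
        (Submodule.Quotient.mk (c (n + 1)) : C ⧸ (Ideal.span {s} ^ n • ⊤ : Submodule R C)) :=
      Submodule.liftQ_apply _ _ _
    rw [hlift] at ht
    have hmem := (Submodule.Quotient.eq _).mp ht
    rw [Ideal.span_singleton_pow, Submodule.ideal_span_singleton_smul] at hmem
    rw [← SetLike.mem_coe, Submodule.coe_pointwise_smul] at hmem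
    obtain ⟨y, -, hy⟩ := Set.mem_smul_set.mp hmem
    exact ⟨y, hy.symm⟩
  choose y hy using hdiff
  set b := Polynomial.basisMonomials R with hb
  set φ : Polynomial R →ₗ[R] C := b.constr ℕ y with hφ
  obtain ⟨ψ₀, hψ₀⟩ := SCA.lift_exists s (ModuleCat.of R C) h (ModuleCat.ofHom φ)
  set ψ : Polynomial R →ₗ[R] C := ψ₀.hom with hψdef
  have hψ : ∀ p : R[X], ψ (SCA.dP s p) = φ p := fun p => hψ₀ p
  have hrec : ∀ n : ℕ, ψ (Polynomial.X ^ n) = y n + s • ψ (Polynomial.X ^ (n + 1)) := by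
    intro n
    have h1 : ψ (SCA.dP s (Polynomial.X ^ n)) = φ (Polynomial.X ^ n) := hψ _
    have h2 : SCA.dP s (Polynomial.X ^ n)
        = Polynomial.X ^ n - s • Polynomial.X ^ (n + 1) := by
      rw [SCA.dP_apply, Polynomial.smul_eq_C_mul]
      ring
    have h3 : φ (Polynomial.X ^ n) = y n := by
      have h4 := b.constr_basis ℕ y n
      rw [hφ, Polynomial.X_pow_eq_monomial]
      rw [hb] at h4 ⊢
      rwa [Polynomial.coe_basisMonomials] at h4
    rw [h2, map_sub, map_smul, h3] at h1
    exact sub_eq_iff_eq_add.mp h1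
  set z := c 0 + ψ (1 : R[X]) with hz
  have hzn : ∀ n : ℕ, z - c n = s ^ n • ψ (Polynomial.X ^ n) := by
    intro n
    induction n with
    | zero => simp [hz]
    | succ n ih =>
      have hsplit : z - c (n + 1) = (z - c n) - (c (n + 1) - c n) := by abel
      rw [hsplit, ih, hrec n, hy n, smul_add, smul_smul, ← pow_succ]
      abel
  refine ⟨z, ?_⟩
  apply AdicCompletion.ext
  intro n
  have hval : (AdicCompletion.of (Ideal.span {s}) C z).val n
      = (Submodule.Quotient.mk z : C ⧸ (Ideal.span {s} ^ n • ⊤ : Submodule R C)) := rfl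
  rw [hval, ← hc n, Submodule.Quotient.eq, hzn n]
  exact Submodule.smul_mem_smul
    (Ideal.pow_mem_pow (Ideal.mem_span_singleton_self s) n) trivial
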